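/- For each d ≥ 1, there exists a connected graph G with exactly 3d vertices such that G admits a locally-optimal coloring using exactly d distinct colors (so the degree of LO_k(G) is exactly d, achieving the upper bound ⌊n/3⌋). One such graph is obtained by taking d disjoint triangles and connecting them in a path by single edges between triangles. -/
import Mathlib


/-- A locally-optimal `k`-coloring: each vertex's own color appears strictly
more often among its neighbors than any other color (plurality). -/
def IsLocOpt {V : Type*} {k : ℕ} (G : SimpleGraph V) (c : V → Fin k) : Prop :=
  ∀ v : V, ∀ d : Fin k, d ≠ c v →
    Nat.card {w : V // G.Adj v w ∧ c w = d} < Nat.card {w : V // G.Adj v w ∧ c w = c v}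

/-- The number of locally-optimal `k`-colorings of `G`. -/
noncomputable def LOcount {V : Type*} (G : SimpleGraph V) (k : ℕ) : ℕ :=
  Nat.card {c : V → Fin k // IsLocOpt G c}

/-- For each `d ≥ 1` there is a connected graph on `3d` vertices admitting a
locally-optimal coloring using exactly `d` distinct colors, achieving the
`⌊n/3⌋` upper bound. -/
theorem stmt12 (d : ℕ) (hd : 1 ≤ d) :
    ∃ G : SimpleGraph (Fin (3 * d)), G.Connected ∧
      ∃ c : Fin (3 * d) → Fin d, IsLocOpt G c ∧ Function.Surjective c := by
  classical
  set G : SimpleGraph (Fin (3 * d)) :=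
    SimpleGraph.fromRel (fun i j => (i : ℕ) / 3 = (j : ℕ) / 3 ∨
      ((j : ℕ) = (i : ℕ) + 1 ∧ (i : ℕ) % 3 = 2)) with hG
  have hadj : ∀ v w : Fin (3 * d), G.Adj v w ↔ v ≠ w ∧
      ((v : ℕ) / 3 = (w : ℕ) / 3 ∨ ((w : ℕ) = (v : ℕ) + 1 ∧ (v : ℕ) % 3 = 2) ∨
        ((v : ℕ) = (w : ℕ) + 1 ∧ (w : ℕ) % 3 = 2)) := by
    intro v w
    rw [hG, SimpleGraph.fromRel_adj]
    constructor
    · rintro ⟨h1, h2⟩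
      exact ⟨h1, by omega⟩
    · rintro ⟨h1, h2⟩
      exact ⟨h1, by omega⟩
  set c : Fin (3 * d) → Fin d := fun v => ⟨(v : ℕ) / 3, by have := v.isLt; omega⟩ with hc
  have hcc : ∀ v w : Fin (3 * d), c w = c v ↔ (w : ℕ) / 3 = (v : ℕ) / 3 := by
    intro v w
    simp [hc, Fin.ext_iff]
  -- connectivity
  have reach : ∀ m (h : m < 3 * d), G.Reachable ⟨0, by omega⟩ ⟨m, h⟩ := by
    intro m
    induction m with
    | zero => intro h; exact SimpleGraph.Reachable.refl _
    | succ k ih =>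
      intro h
      refine (ih (by omega)).trans (SimpleGraph.Adj.reachable ?_)
      rw [hadj]
      constructor
      · simp only [ne_eq, Fin.mk.injEq]; omega
      · show k / 3 = (k + 1) / 3 ∨ (k + 1 = k + 1 ∧ k % 3 = 2) ∨ (k = k + 1 + 1 ∧ (k + 1) % 3 = 2)
        omega
  refine ⟨G, ?_, c, ?_, ?_⟩
  · haveI : Nonempty (Fin (3 * d)) := ⟨⟨0, by omega⟩⟩
    exact SimpleGraph.Connected.mk (fun u v => (reach u.1 u.2).symm.trans (reach v.1 v.2))
  · -- local optimality
    intro v e he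
    have hv := v.isLt
    -- the same-color neighbor count is 2
    have hsame : Nat.card {w : Fin (3 * d) // G.Adj v w ∧ c w = c v} = 2 := by
      have hset : ∀ w : Fin (3 * d), (G.Adj v w ∧ c w = c v) ↔
          ((w : ℕ) / 3 = (v : ℕ) / 3 ∧ w ≠ v) := by
        intro w
        rw [hadj, hcc]
        constructor
        · rintro ⟨⟨h1, _⟩, h3⟩
          exact ⟨h3, fun hh => h1 hh.symm⟩
        · rintro ⟨h1, h2⟩
          exact ⟨⟨fun hh => h2 hh.symm, Or.inl h1.symm⟩, h1⟩
      have e1 : {w : Fin (3 * d) // G.Adj v w ∧ c w = c v} ≃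
          {m : Fin 3 // m ≠ (⟨(v : ℕ) % 3, by omega⟩ : Fin 3)} :=
        { toFun := fun w => ⟨⟨(w.1 : ℕ) % 3, by omega⟩, by
            have h := (hset w.1).1 w.2
            have hne : (w.1 : ℕ) ≠ (v : ℕ) := fun hh => h.2 (Fin.ext hh)
            simp only [ne_eq, Fin.mk.injEq]
            have := h.1
            omega⟩
          invFun := fun m => ⟨⟨(v : ℕ) / 3 * 3 + (m.1 : ℕ), by have := m.1.isLt; omega⟩,
            (hset _).2 ⟨by have := m.1.isLt; simp only [Fin.val_mk]; omega, by
              intro hh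
              apply m.2
              apply Fin.ext
              have := congrArg Fin.val hh
              simp only [Fin.val_mk] at this
              show (m.1 : ℕ) = (v : ℕ) % 3
              omega⟩⟩
          left_inv := by
            rintro ⟨w, hw⟩
            have h := (hset w).1 hw
            apply Subtype.ext
            apply Fin.ext
            simp only [Fin.val_mk]
            have := h.1
            omega
          right_inv := by
            rintro ⟨m, hm⟩
            apply Subtype.ext
            apply Fin.ext
            have := m.isLt
            simp only [Fin.val_mk]
            omega }
      rw [Nat.card_congr e1, Nat.card_eq_fintype_card]
      have h2 : ∀ r : Fin 3, Fintype.card {m : Fin 3 // m ≠ r} = 2 := by decide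
      exact h2 _
    rw [hsame]
    -- the other-color neighbor count is at most 1
    have hother : Nat.card {w : Fin (3 * d) // G.Adj v w ∧ c w = e} ≤ 1 := by
      rw [Nat.card_eq_fintype_card]
      rw [Fintype.card_le_one_iff]
      rintro ⟨w1, hw1, hcw1⟩ ⟨w2, hw2, hcw2⟩
      have hd1 : (w1 : ℕ) / 3 ≠ (v : ℕ) / 3 := by
        intro hh
        exact he (hcw1 ▸ (hcc v w1).2 hh)
      have hd2 : (w2 : ℕ) / 3 ≠ (v : ℕ) / 3 := by
        intro hh
        exact he (hcw2 ▸ (hcc v w2).2 hh)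
      rw [hadj] at hw1 hw2
      have h1 := hw1.2
      have h2 := hw2.2
      apply Subtype.ext
      apply Fin.ext
      show (w1 : ℕ) = (w2 : ℕ)
      omega
    omega
  · -- surjectivity
    intro t
    refine ⟨⟨3 * (t : ℕ), by have := t.isLt; omega⟩, ?_⟩
    apply Fin.ext
    simp only [hc, Fin.val_mk]
    omega
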